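/- Let λ > 0 and let F(x) = 1 - exp(-λx) for x > 0 be the exponential distribution function. Let Q be a PGF and let c ∈ (0,1). Then Q(F(x)) = F(cx) for all x > 0 if and only if Q(s) = 1 - (1-s)^c for all s ∈ [0,1] (i.e., Q is the Sibuya(v) PGF with v = c). In other words, the exponential law is N-max stable if and only if N is Sibuya(v), with c = v. -/

import Mathlib

/-- `Q : ℝ → ℝ` is the probability generating function of a positive integer-valued
random variable: `Q s = ∑ pₙ sⁿ` on `[0,1]` with `pₙ ≥ 0`, `p₀ = 0`, `∑ pₙ = 1`. -/
def IsPGF (Q : ℝ → ℝ) : Prop :=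
  ∃ p : ℕ → ℝ, (∀ n, 0 ≤ p n) ∧ p 0 = 0 ∧ (∑' n, p n) = 1 ∧
    ∀ s ∈ Set.Icc (0:ℝ) 1, Q s = ∑' n, p n * s ^ n

/-- The exponential law is N-max stable iff N is Sibuya(v) with v = c. -/
theorem exponential_max_stable_iff_sibuya
    (lam : ℝ) (hlam : 0 < lam) (F Q : ℝ → ℝ)
    (hF : ∀ x : ℝ, 0 < x → F x = 1 - Real.exp (-(lam * x)))
    (hQ : IsPGF Q) (c : ℝ) (hc : c ∈ Set.Ioo (0:ℝ) 1) :
    (∀ x : ℝ, 0 < x → Q (F x) = F (c * x)) ↔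
      (∀ s ∈ Set.Icc (0:ℝ) 1, Q s = 1 - (1 - s) ^ c) := by
  obtain ⟨p, hp0, hp00, hpsum, hQrep⟩ := hQ
  obtain ⟨hc0, hc1⟩ := hc
  constructor
  · intro h s hs
    obtain ⟨hs0, hs1⟩ := hs
    rcases eq_or_lt_of_le hs1 with h1 | h1
    · -- s = 1
      have hQ1 : Q s = 1 := by
        rw [hQrep s ⟨hs0, hs1⟩, h1]
        simpa using hpsum
      rw [hQ1, h1, sub_self, Real.zero_rpow hc0.ne', sub_zero]
    · rcases eq_or_lt_of_le hs0 with h0 | h0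
      · -- s = 0
        have hQ0 : Q s = 0 := by
          rw [hQrep s ⟨hs0, hs1⟩, ← h0]
          have : (fun n => p n * (0:ℝ) ^ n) = fun _ => (0:ℝ) := by
            funext n
            cases n with
            | zero => simp [hp00]
            | succ m => simp
          rw [this, tsum_zero]
        rw [hQ0, ← h0, sub_zero, Real.one_rpow, sub_self]
      · -- 0 < s < 1
        set x := -Real.log (1 - s) / lam with hxdef
        have hlog : Real.log (1 - s) < 0 := Real.log_neg (by linarith) (by linarith)
        have hx : 0 < x := div_pos (by linarith) hlam
        have hlx : lam * x = -Real.log (1 - s) := by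
          rw [hxdef]; field_simp
        have hFx : F x = s := by
          rw [hF x hx, hlx, neg_neg, Real.exp_log (by linarith)]; ring
        have hh := h x hx
        rw [hFx, hF (c * x) (mul_pos hc0 hx)] at hh
        rw [hh]
        congr 1
        rw [Real.rpow_def_of_pos (by linarith : (0:ℝ) < 1 - s)]
        congr 1
        have : lam * (c * x) = c * (lam * x) := by ring
        rw [this, hlx]; ring
  · intro h x hx
    have hFx := hF x hx
    have hle : Real.exp (-(lam * x)) ≤ 1 :=
      Real.exp_le_one_iff.mpr (by nlinarith)
    have hpos := Real.exp_pos (-(lam * x))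
    have hmem : F x ∈ Set.Icc (0:ℝ) 1 := by
      rw [hFx]; constructor <;> [linarith; linarith]
    rw [h (F x) hmem, hFx, hF (c * x) (mul_pos hc0 hx)]
    have : (1:ℝ) - (1 - Real.exp (-(lam * x))) = Real.exp (-(lam * x)) := by ring
    rw [this, Real.rpow_def_of_pos hpos, Real.log_exp]
    congr 2
    ring
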